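/- Suppose H is a function on r-tuples of ideals satisfying H(I₁,…,I_r)·H(I₁′,…,I_r′)·∏_{i<j adjacent} (I_i/I_j′)(I_i′/I_j) = H(I₁I₁′,…,I_rI_r′) whenever (I₁⋯I_r, I₁′⋯I_r′) = 1, and H(I,1,…,1) = 1 for all I together with H(P^{k₁},…,P^{k_r}) defined on prime powers. Then for pairwise relatively prime ideals I₁,…,I_r with each H(1,…,I_j,…,1) = 1, one has H(I₁,…,I_r) = ∏_{i<j adjacent} (I_i/I_j), where (·/·) denotes the quadratic residue symbol. -/

import Mathlib

open scoped Classical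

/-- If `H` satisfies the twisted multiplicativity
`H(I)·H(I′)·∏_{i<j adj} (I_i/I_j′)(I_i′/I_j) = H(I·I′)` for coprime tuples, and
`H(I,1,…,1) = 1` for all `I`, then for pairwise coprime `I₁,…,I_r` with each
`H(1,…,I_j,…,1) = 1` one has `H(I₁,…,I_r) = ∏_{i<j adj} (I_i/I_j)`. -/
theorem stmt_17 (r : ℕ) (hr : 0 < r) (Adj : Fin r → Fin r → Prop)
    (hsymm : ∀ i j, Adj i j → Adj j i) (hirr : ∀ i, ¬Adj i i)
    -- the quadratic residue symbol, a bimultiplicative `±1`-valued pairing on coprime ideals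
    (χ : ℕ → ℕ → ℝ)
    (hχval : ∀ m n, Nat.Coprime m n → χ m n = 1 ∨ χ m n = -1)
    (hχmul_left : ∀ a b n, Nat.Coprime (a * b) n → χ (a * b) n = χ a n * χ b n)
    (hχmul_right : ∀ m a b, Nat.Coprime m (a * b) → χ m (a * b) = χ m a * χ m b)
    (H : (Fin r → ℕ) → ℝ)
    (hH : ∀ I I' : Fin r → ℕ, Nat.Coprime (∏ i, I i) (∏ i, I' i) →
      H I * H I' *
          ∏ p ∈ Finset.univ.filter (fun p : Fin r × Fin r => Adj p.1 p.2 ∧ p.1 < p.2),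
            χ (I p.1) (I' p.2) * χ (I' p.1) (I p.2) =
        H (fun i => I i * I' i))
    (hone : ∀ n : ℕ, H (Function.update (fun _ => 1) ⟨0, hr⟩ n) = 1)
    (I : Fin r → ℕ) (hpos : ∀ i, 0 < I i)
    (hcop : ∀ i j, i ≠ j → Nat.Coprime (I i) (I j))
    (hIone : ∀ j : Fin r, H (Function.update (fun _ => 1) j (I j)) = 1) :
    H I = ∏ p ∈ Finset.univ.filter (fun p : Fin r × Fin r => Adj p.1 p.2 ∧ p.1 < p.2),
      χ (I p.1) (I p.2) := by
  -- χ of 1 is 1 on either side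
  have hχ1r : ∀ m, χ m 1 = 1 := by
    intro m
    have h := hχmul_right m 1 1 (Nat.coprime_one_right m)
    rcases hχval m 1 (Nat.coprime_one_right m) with h1 | h1
    · exact h1
    · rw [h1] at h; norm_num at h
  have hχ1l : ∀ n, χ 1 n = 1 := by
    intro n
    have h := hχmul_left 1 1 n (Nat.coprime_one_left n)
    rcases hχval 1 n (Nat.coprime_one_left n) with h1 | h1
    · exact h1
    · rw [h1] at h; norm_num at h
  have key : ∀ s : Finset (Fin r),
      H (fun i => if i ∈ s then I i else 1) =
        ∏ p ∈ Finset.univ.filter (fun p : Fin r × Fin r => Adj p.1 p.2 ∧ p.1 < p.2),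
          (if p.1 ∈ s ∧ p.2 ∈ s then χ (I p.1) (I p.2) else 1) := by
    intro s
    induction s using Finset.induction with
    | empty =>
        simp only [Finset.notMem_empty, if_false, false_and]
        have h1 := hone 1
        rw [Function.update_eq_self] at h1
        rw [h1, Finset.prod_const_one]
    | insert _ _ ha =>
        rename_i a s ih
        set J : Fin r → ℕ := fun i => if i ∈ s then I i else 1 with hJ
        set e : Fin r → ℕ := Function.update (fun _ => 1) a (I a) with he
        have hcp : Nat.Coprime (∏ i, J i) (∏ i, e i) := by
          apply Nat.Coprime.prod_left
          intro i _
          apply Nat.Coprime.prod_right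
          intro j _
          by_cases hi : i ∈ s <;> by_cases hj : j = a <;>
            simp [hJ, he, Function.update_apply, hi, hj, Nat.coprime_one_left,
              Nat.coprime_one_right]
          exact hcop i a (fun h => ha (h ▸ hi))
        have heq := hH J e hcp
        have hJe : (fun i => J i * e i) = (fun i => if i ∈ insert a s then I i else 1) := by
          funext i
          by_cases hi : i = a
          · subst hi
            simp [hJ, he, ha]
          · simp [hJ, he, Function.update_apply, hi, Finset.mem_insert]
        rw [hJe] at heq
        rw [← heq, ih, hIone a, mul_one, ← Finset.prod_mul_distrib]
        apply Finset.prod_congr rfl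
        intro p hp
        simp only [Finset.mem_filter, Finset.mem_univ, true_and] at hp
        have hne : p.1 ≠ p.2 := ne_of_lt hp.2
        by_cases h1 : p.1 = a <;> by_cases h2 : p.2 = a
        · exact absurd (h1.trans h2.symm) hne
        · -- p.1 = a, p.2 ≠ a : first if false, factor χ (I a) (J p.2)
          have h1s : p.1 ∉ s := h1 ▸ ha
          by_cases h2s : p.2 ∈ s <;>
            simp [hJ, he, Function.update_apply, h1, h2, h1s, h2s, ha, hχ1l, hχ1r,
              Finset.mem_insert]
        · have h2s : p.2 ∉ s := h2 ▸ ha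
          by_cases h1s : p.1 ∈ s <;>
            simp [hJ, he, Function.update_apply, h1, h2, h1s, h2s, ha, hχ1l, hχ1r,
              Finset.mem_insert]
        · by_cases h1s : p.1 ∈ s <;> by_cases h2s : p.2 ∈ s <;>
            simp [hJ, he, Function.update_apply, h1, h2, h1s, h2s, ha, hχ1l, hχ1r,
              Finset.mem_insert]
  have h := key Finset.univ
  simp only [Finset.mem_univ, if_true, true_and, and_self] at h
  convert h using 2
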